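/- Let p, q, a, b : [t₀, t₁] → ℝ² be continuous motions of four points with p(t) ≠ q(t) for all t. Say the configuration is 'violated' at time t if a(t) and b(t) lie in opposite open halfplanes bounded by the line through p(t) and q(t) and b(t) lies in the open interior of the circumdisc of p(t), q(t), a(t). Suppose the configuration is violated at t₀ but not at t₁. Then there exists t ∈ (t₀, t₁] at which (i) a(t) lies on the closed segment [p(t), q(t)], or (ii) b(t) lies on the closed segment [p(t), q(t)], or (iii) the four points p(t), q(t), a(t), b(t) lie on a common circle. -/

import Mathlib

noncomputable section

/-- Points of the Euclidean plane. -/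
abbrev Pt := EuclideanSpace ℝ (Fin 2)

/-- The orientation (cross product) determinant of the triple `(p, q, r)`. -/
def orient (p q r : Pt) : ℝ :=
  (q 0 - p 0) * (r 1 - p 1) - (q 1 - p 1) * (r 0 - p 0)

/-- The Delaunayhood of the edge `pq` is violated by the pair `a, b`: the points `a`
and `b` lie in opposite open halfplanes bounded by the line `pq`, and `b` lies in the
open interior of the circumdisc of `p, q, a`. -/
def Violated (p q a b : Pt) : Prop :=
  orient p q a * orient p q b < 0 ∧
    ∃ c : Pt, ∃ ρ : ℝ, dist p c = ρ ∧ dist q c = ρ ∧ dist a c = ρ ∧ dist b c < ρ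

namespace Stmt13Aux

/-- The dot product `(x - p) · (x - q)`. -/
def dotpq (p q x : Pt) : ℝ := (x 0 - p 0) * (x 0 - q 0) + (x 1 - p 1) * (x 1 - q 1)

/-- The in-circle quantity. -/
def Dt (p q a b : Pt) : ℝ := dotpq p q b * orient p q a - dotpq p q a * orient p q b

lemma dist_sq (x c : Pt) : dist x c ^ 2 = (x 0 - c 0) ^ 2 + (x 1 - c 1) ^ 2 := by
  rw [EuclideanSpace.dist_eq, Real.sq_sqrt (by positivity)]
  simp [Fin.sum_univ_two, Real.dist_eq, sq_abs]

lemma Dt_circ (p q a b c : Pt) (ρ : ℝ)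
    (hP : (p 0 - c 0) ^ 2 + (p 1 - c 1) ^ 2 = ρ ^ 2)
    (hQ : (q 0 - c 0) ^ 2 + (q 1 - c 1) ^ 2 = ρ ^ 2)
    (hA : (a 0 - c 0) ^ 2 + (a 1 - c 1) ^ 2 = ρ ^ 2) :
    Dt p q a b = ((b 0 - c 0) ^ 2 + (b 1 - c 1) ^ 2 - ρ ^ 2) * orient p q a := by
  simp only [Dt, dotpq, orient]
  linear_combination ((a 0 - p 0) * (b 1 - p 1) - (a 1 - p 1) * (b 0 - p 0)) * hQ
    - ((q 0 - p 0) * (b 1 - p 1) - (q 1 - p 1) * (b 0 - p 0)) * hA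
    + (((q 0 - p 0) * (b 1 - p 1) - (q 1 - p 1) * (b 0 - p 0))
       - ((a 0 - p 0) * (b 1 - p 1) - (a 1 - p 1) * (b 0 - p 0))
       - ((q 0 - p 0) * (a 1 - p 1) - (q 1 - p 1) * (a 0 - p 0))) * hP

lemma circum (p q a : Pt) (hg : orient p q a ≠ 0) :
    ∃ c : Pt, (q 0 - c 0) ^ 2 + (q 1 - c 1) ^ 2 = (p 0 - c 0) ^ 2 + (p 1 - c 1) ^ 2 ∧
      (a 0 - c 0) ^ 2 + (a 1 - c 1) ^ 2 = (p 0 - c 0) ^ 2 + (p 1 - c 1) ^ 2 := by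
  have ho : orient p q a ≠ 0 := hg
  simp only [orient] at ho
  refine ⟨(WithLp.equiv 2 (Fin 2 → ℝ)).symm
    ![((q 0 ^ 2 + q 1 ^ 2 - p 0 ^ 2 - p 1 ^ 2) * (a 1 - p 1)
        - (a 0 ^ 2 + a 1 ^ 2 - p 0 ^ 2 - p 1 ^ 2) * (q 1 - p 1)) / (2 * orient p q a),
      ((q 0 - p 0) * (a 0 ^ 2 + a 1 ^ 2 - p 0 ^ 2 - p 1 ^ 2)
        - (a 0 - p 0) * (q 0 ^ 2 + q 1 ^ 2 - p 0 ^ 2 - p 1 ^ 2)) / (2 * orient p q a)],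
    ?_, ?_⟩ <;>
  · simp only [WithLp.equiv_symm_apply, PiLp.toLp_apply, Matrix.cons_val_zero, Matrix.cons_val_one,
      Matrix.head_cons, orient]
    have ho' : (a 1 - p 1) * (q 0 - p 0) - (q 1 - p 1) * (a 0 - p 0) ≠ 0 := by
      intro h; apply ho; linarith
    field_simp
    ring

lemma seg_of (p q x : Pt) (hpq : p ≠ q) (hg : orient p q x = 0) (hA : dotpq p q x ≤ 0) :
    x ∈ segment ℝ p q := by
  have hL : 0 < (q 0 - p 0) ^ 2 + (q 1 - p 1) ^ 2 := by
    have hex : ∃ i, p i ≠ q i := by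
      by_contra hcon
      push_neg at hcon
      exact hpq (PiLp.ext hcon)
    obtain ⟨i, hi⟩ := hex
    fin_cases i
    · have h' : q 0 - p 0 ≠ 0 := sub_ne_zero_of_ne (Ne.symm hi)
      nlinarith [sq_pos_of_ne_zero h', sq_nonneg (q 1 - p 1)]
    · have h' : q 1 - p 1 ≠ 0 := sub_ne_zero_of_ne (Ne.symm hi)
      nlinarith [sq_pos_of_ne_zero h', sq_nonneg (q 0 - p 0)]
  set s : ℝ := ((x 0 - p 0) * (q 0 - p 0) + (x 1 - p 1) * (q 1 - p 1)) /
      ((q 0 - p 0) ^ 2 + (q 1 - p 1) ^ 2) with hs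
  simp only [orient] at hg
  simp only [dotpq] at hA
  have hx0 : x 0 - p 0 = s * (q 0 - p 0) := by
    rw [hs, div_mul_eq_mul_div, eq_div_iff (ne_of_gt hL)]
    linear_combination (-(q 1 - p 1)) * hg
  have hx1 : x 1 - p 1 = s * (q 1 - p 1) := by
    rw [hs, div_mul_eq_mul_div, eq_div_iff (ne_of_gt hL)]
    linear_combination (q 0 - p 0) * hg
  have e : s * ((s - 1) * ((q 0 - p 0) ^ 2 + (q 1 - p 1) ^ 2))
      = (x 0 - p 0) * (x 0 - q 0) + (x 1 - p 1) * (x 1 - q 1) := by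
    linear_combination (-(x 0 - p 0) - s * (q 0 - p 0) + (q 0 - p 0)) * hx0
      + (-(x 1 - p 1) - s * (q 1 - p 1) + (q 1 - p 1)) * hx1
  have hs1 : s * (s - 1) ≤ 0 := by nlinarith
  have hs0 : 0 ≤ s := by nlinarith [sq_nonneg s]
  have hs2 : s ≤ 1 := by nlinarith [sq_nonneg s]
  refine ⟨1 - s, s, by linarith, hs0, by ring, ?_⟩
  refine PiLp.ext fun i => ?_
  fin_cases i
  · show ((1 - s) • p + s • q) 0 = x 0
    simp only [PiLp.add_apply, PiLp.smul_apply, smul_eq_mul]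
    linear_combination -hx0
  · show ((1 - s) • p + s • q) 1 = x 1
    simp only [PiLp.add_apply, PiLp.smul_apply, smul_eq_mul]
    linear_combination -hx1

lemma dist_eq_of_sq (u v c : Pt)
    (h : (u 0 - c 0) ^ 2 + (u 1 - c 1) ^ 2 = (v 0 - c 0) ^ 2 + (v 1 - c 1) ^ 2) :
    dist u c = dist v c := by
  have h2 : dist u c ^ 2 = dist v c ^ 2 := by rw [dist_sq, dist_sq, h]
  have := congrArg Real.sqrt h2
  rwa [Real.sqrt_sq dist_nonneg, Real.sqrt_sq dist_nonneg] at this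

lemma viol_iff (p q a b : Pt) :
    Violated p q a b ↔ orient p q a * orient p q b < 0 ∧ Dt p q a b * orient p q a < 0 := by
  constructor
  · rintro ⟨h1, c, ρ, hpc, hqc, hac, hbc⟩
    have hg : orient p q a ≠ 0 := by
      intro h0
      rw [h0, zero_mul] at h1
      exact lt_irrefl _ h1
    refine ⟨h1, ?_⟩
    have hP : (p 0 - c 0) ^ 2 + (p 1 - c 1) ^ 2 = ρ ^ 2 := by rw [← dist_sq, hpc]
    have hQ : (q 0 - c 0) ^ 2 + (q 1 - c 1) ^ 2 = ρ ^ 2 := by rw [← dist_sq, hqc]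
    have hA : (a 0 - c 0) ^ 2 + (a 1 - c 1) ^ 2 = ρ ^ 2 := by rw [← dist_sq, hac]
    have hB : (b 0 - c 0) ^ 2 + (b 1 - c 1) ^ 2 < ρ ^ 2 := by
      rw [← dist_sq]
      exact pow_lt_pow_left₀ hbc dist_nonneg (by norm_num)
    rw [Dt_circ p q a b c ρ hP hQ hA]
    nlinarith [sq_pos_of_ne_zero hg]
  · rintro ⟨h1, h2⟩
    have hg : orient p q a ≠ 0 := by
      intro h0
      rw [h0, zero_mul] at h1
      exact lt_irrefl _ h1
    obtain ⟨c, hQ, hA⟩ := circum p q a hg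
    refine ⟨h1, c, dist p c, rfl, dist_eq_of_sq q p c hQ, dist_eq_of_sq a p c hA, ?_⟩
    have hP' : (p 0 - c 0) ^ 2 + (p 1 - c 1) ^ 2 = dist p c ^ 2 := (dist_sq p c).symm
    have hd := Dt_circ p q a b c (dist p c) hP' (hQ.trans hP') (hA.trans hP')
    rw [hd] at h2
    have hBneg : (b 0 - c 0) ^ 2 + (b 1 - c 1) ^ 2 < dist p c ^ 2 := by
      nlinarith [sq_pos_of_ne_zero hg]
    have hb2 : dist b c ^ 2 < dist p c ^ 2 := by rw [dist_sq]; linarith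
    exact lt_of_pow_lt_pow_left₀ 2 dist_nonneg hb2

lemma cocirc (p q a b : Pt) (hg : orient p q a ≠ 0) (hD : Dt p q a b = 0) :
    ∃ c : Pt, ∃ ρ : ℝ, dist p c = ρ ∧ dist q c = ρ ∧ dist a c = ρ ∧ dist b c = ρ := by
  obtain ⟨c, hQ, hA⟩ := circum p q a hg
  refine ⟨c, dist p c, rfl, dist_eq_of_sq q p c hQ, dist_eq_of_sq a p c hA, ?_⟩
  have hP' : (p 0 - c 0) ^ 2 + (p 1 - c 1) ^ 2 = dist p c ^ 2 := (dist_sq p c).symm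
  have hd := Dt_circ p q a b c (dist p c) hP' (hQ.trans hP') (hA.trans hP')
  rw [hD] at hd
  have hB0 : (b 0 - c 0) ^ 2 + (b 1 - c 1) ^ 2 = dist p c ^ 2 := by
    rcases mul_eq_zero.mp hd.symm with h | h
    · linarith
    · exact absurd h hg
  exact dist_eq_of_sq b p c (hB0.trans (dist_sq p c))

lemma AB_neg (p q a b : Pt) (h1 : orient p q a * orient p q b < 0)
    (h2 : Dt p q a b * orient p q a < 0) : dotpq p q a < 0 ∨ dotpq p q b < 0 := by
  by_contra hcon
  push_neg at hcon
  simp only [Dt] at h2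
  nlinarith [mul_nonneg hcon.2 (sq_nonneg (orient p q a)),
    mul_nonneg hcon.1 (neg_nonneg.mpr h1.le)]

lemma cont_le_zero {f : ℝ → ℝ} {s e : ℝ} (hse : s < e) (hf : ContinuousOn f (Set.Icc s e))
    (h : ∀ u ∈ Set.Ico s e, f u < 0) : f e ≤ 0 := by
  have hcl : e ∈ closure (Set.Ico s e) := by
    rw [closure_Ico hse.ne]
    exact Set.right_mem_Icc.mpr hse.le
  haveI := mem_closure_iff_nhdsWithin_neBot.mp hcl
  have hc : Filter.Tendsto f (nhdsWithin e (Set.Ico s e)) (nhds (f e)) :=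
    (hf e (Set.right_mem_Icc.mpr hse.le)).mono Set.Ico_subset_Icc_self
  exact le_of_tendsto hc (eventually_nhdsWithin_of_forall fun u hu => (h u hu).le)

end Stmt13Aux

open Stmt13Aux in
/-- If four continuously moving points (with `p(t) ≠ q(t)` throughout) are such that
the Delaunayhood of `pq` is violated by `a, b` at time `t₀` but not at time `t₁`, then
at some time `t ∈ (t₀, t₁]` either `a` lies on the closed segment `[p, q]`, or `b` does,
or the four points are co-circular. -/
theorem stmt13 (t₀ t₁ : ℝ) (ht : t₀ ≤ t₁) (p q a b : ℝ → Pt)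
    (hp : ContinuousOn p (Set.Icc t₀ t₁)) (hq : ContinuousOn q (Set.Icc t₀ t₁))
    (ha : ContinuousOn a (Set.Icc t₀ t₁)) (hb : ContinuousOn b (Set.Icc t₀ t₁))
    (hne : ∀ t ∈ Set.Icc t₀ t₁, p t ≠ q t)
    (h0 : Violated (p t₀) (q t₀) (a t₀) (b t₀))
    (h1 : ¬ Violated (p t₁) (q t₁) (a t₁) (b t₁)) :
    ∃ t ∈ Set.Ioc t₀ t₁,
      a t ∈ segment ℝ (p t) (q t) ∨ b t ∈ segment ℝ (p t) (q t) ∨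
        ∃ c : Pt, ∃ ρ : ℝ, dist (p t) c = ρ ∧ dist (q t) c = ρ ∧
          dist (a t) c = ρ ∧ dist (b t) c = ρ := by
  classical
  have hp0 : ContinuousOn (fun t => p t 0) (Set.Icc t₀ t₁) :=
    ((continuous_apply (0 : Fin 2)).comp (PiLp.continuous_ofLp 2 _)).comp_continuousOn hp
  have hp1 : ContinuousOn (fun t => p t 1) (Set.Icc t₀ t₁) :=
    ((continuous_apply (1 : Fin 2)).comp (PiLp.continuous_ofLp 2 _)).comp_continuousOn hp
  have hq0 : ContinuousOn (fun t => q t 0) (Set.Icc t₀ t₁) :=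
    ((continuous_apply (0 : Fin 2)).comp (PiLp.continuous_ofLp 2 _)).comp_continuousOn hq
  have hq1 : ContinuousOn (fun t => q t 1) (Set.Icc t₀ t₁) :=
    ((continuous_apply (1 : Fin 2)).comp (PiLp.continuous_ofLp 2 _)).comp_continuousOn hq
  have ha0 : ContinuousOn (fun t => a t 0) (Set.Icc t₀ t₁) :=
    ((continuous_apply (0 : Fin 2)).comp (PiLp.continuous_ofLp 2 _)).comp_continuousOn ha
  have ha1 : ContinuousOn (fun t => a t 1) (Set.Icc t₀ t₁) :=
    ((continuous_apply (1 : Fin 2)).comp (PiLp.continuous_ofLp 2 _)).comp_continuousOn ha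
  have hb0 : ContinuousOn (fun t => b t 0) (Set.Icc t₀ t₁) :=
    ((continuous_apply (0 : Fin 2)).comp (PiLp.continuous_ofLp 2 _)).comp_continuousOn hb
  have hb1 : ContinuousOn (fun t => b t 1) (Set.Icc t₀ t₁) :=
    ((continuous_apply (1 : Fin 2)).comp (PiLp.continuous_ofLp 2 _)).comp_continuousOn hb
  set G : ℝ → ℝ := fun t => orient (p t) (q t) (a t) with hGdef
  set H : ℝ → ℝ := fun t => orient (p t) (q t) (b t) with hHdef
  set FA : ℝ → ℝ := fun t => dotpq (p t) (q t) (a t) with hFAdef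
  set FB : ℝ → ℝ := fun t => dotpq (p t) (q t) (b t) with hFBdef
  set D : ℝ → ℝ := fun t => Dt (p t) (q t) (a t) (b t) with hDdef
  have hGc : ContinuousOn G (Set.Icc t₀ t₁) := by
    simp only [hGdef, orient]
    exact ((hq0.sub hp0).mul (ha1.sub hp1)).sub ((hq1.sub hp1).mul (ha0.sub hp0))
  have hHc : ContinuousOn H (Set.Icc t₀ t₁) := by
    simp only [hHdef, orient]
    exact ((hq0.sub hp0).mul (hb1.sub hp1)).sub ((hq1.sub hp1).mul (hb0.sub hp0))
  have hFAc : ContinuousOn FA (Set.Icc t₀ t₁) := by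
    simp only [hFAdef, dotpq]
    exact ((ha0.sub hp0).mul (ha0.sub hq0)).add ((ha1.sub hp1).mul (ha1.sub hq1))
  have hFBc : ContinuousOn FB (Set.Icc t₀ t₁) := by
    simp only [hFBdef, dotpq]
    exact ((hb0.sub hp0).mul (hb0.sub hq0)).add ((hb1.sub hp1).mul (hb1.sub hq1))
  have hDc : ContinuousOn D (Set.Icc t₀ t₁) := by
    have : D = fun t => FB t * G t - FA t * H t := rfl
    rw [this]
    exact (hFBc.mul hGc).sub (hFAc.mul hHc)
  set C : Set ℝ := {u | u ∈ Set.Icc t₀ t₁ ∧ (0 ≤ G u * H u ∨ 0 ≤ D u * G u)} with hCdef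
  have hCcl : IsClosed C := by
    have hCeq : C = (Set.Icc t₀ t₁ ∩ (fun u => G u * H u) ⁻¹' Set.Ici 0) ∪
        (Set.Icc t₀ t₁ ∩ (fun u => D u * G u) ⁻¹' Set.Ici 0) := by
      ext u
      simp only [hCdef, Set.mem_setOf_eq, Set.mem_union, Set.mem_inter_iff,
        Set.mem_preimage, Set.mem_Ici]
      tauto
    rw [hCeq]
    exact ((hGc.mul hHc).preimage_isClosed_of_isClosed isClosed_Icc isClosed_Ici).union
      ((hDc.mul hGc).preimage_isClosed_of_isClosed isClosed_Icc isClosed_Ici)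
  have ht1I : t₁ ∈ Set.Icc t₀ t₁ := Set.right_mem_Icc.mpr ht
  have ht1C : t₁ ∈ C := by
    refine ⟨ht1I, ?_⟩
    by_contra hcon
    push_neg at hcon
    exact h1 ((viol_iff _ _ _ _).mpr ⟨hcon.1, hcon.2⟩)
  have hCne : C.Nonempty := ⟨t₁, ht1C⟩
  have hCbdd : BddBelow C := ⟨t₀, fun u hu => hu.1.1⟩
  set τ := sInf C with hτdef
  have hτC : τ ∈ C := hCcl.csInf_mem hCne hCbdd
  have hτI : τ ∈ Set.Icc t₀ t₁ := hτC.1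
  have h0' := (viol_iff _ _ _ _).mp h0
  have hτ0 : t₀ < τ := by
    rcases lt_or_eq_of_le hτI.1 with h | h
    · exact h
    · exfalso
      have h2 := hτC.2
      rw [← h] at h2
      rcases h2 with hc | hc
      · linarith [h0'.1]
      · linarith [h0'.2]
  have hlow : ∀ u ∈ Set.Ico t₀ τ, G u * H u < 0 ∧ D u * G u < 0 := by
    intro u hu
    have huI : u ∈ Set.Icc t₀ t₁ := ⟨hu.1, hu.2.le.trans hτI.2⟩
    have hnC : u ∉ C := notMem_of_lt_csInf (hτdef ▸ hu.2) hCbdd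
    have hcon : ¬ (0 ≤ G u * H u ∨ 0 ≤ D u * G u) := fun h' => hnC ⟨huI, h'⟩
    push_neg at hcon
    exact hcon
  have hsub : Set.Icc t₀ τ ⊆ Set.Icc t₀ t₁ := Set.Icc_subset_Icc_right hτI.2
  have GH_le : G τ * H τ ≤ 0 :=
    cont_le_zero (f := fun t => G t * H t) (e := τ) hτ0 ((hGc.mul hHc).mono hsub)
      (fun u hu => (hlow u hu).1)
  have DG_le : D τ * G τ ≤ 0 :=
    cont_le_zero (f := fun t => D t * G t) (e := τ) hτ0 ((hDc.mul hGc).mono hsub)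
      (fun u hu => (hlow u hu).2)
  have DH_ge : 0 ≤ D τ * H τ := by
    have hneg : (fun t => -(D t * H t)) τ ≤ 0 := by
      refine cont_le_zero (f := fun t => -(D t * H t)) (e := τ) hτ0
        (((hDc.mul hHc).mono hsub).neg) (fun u hu => ?_)
      show -(D u * H u) < 0
      have h1' := (hlow u hu).1
      have h2' := (hlow u hu).2
      nlinarith [mul_pos (by linarith : (0:ℝ) < -(D u * G u)) (by linarith : (0:ℝ) < -(G u * H u)),
        sq_nonneg (G u)]
    have : -(D τ * H τ) ≤ 0 := hneg
    linarith
  have hclτ : τ ∈ closure (Set.Ico t₀ τ) := by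
    rw [closure_Ico hτ0.ne]
    exact Set.right_mem_Icc.mpr hτ0.le
  have hABτ : FA τ ≤ 0 ∨ FB τ ≤ 0 := by
    by_contra hcon
    push_neg at hcon
    haveI := mem_closure_iff_nhdsWithin_neBot.mp hclτ
    have hAt : Filter.Tendsto FA (nhdsWithin τ (Set.Ico t₀ τ)) (nhds (FA τ)) :=
      ((hFAc.mono hsub) τ (Set.right_mem_Icc.mpr hτ0.le)).mono Set.Ico_subset_Icc_self
    have hBt : Filter.Tendsto FB (nhdsWithin τ (Set.Ico t₀ τ)) (nhds (FB τ)) :=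
      ((hFBc.mono hsub) τ (Set.right_mem_Icc.mpr hτ0.le)).mono Set.Ico_subset_Icc_self
    have e1 : ∀ᶠ u in nhdsWithin τ (Set.Ico t₀ τ), 0 < FA u :=
      hAt.eventually (eventually_gt_nhds hcon.1)
    have e2 : ∀ᶠ u in nhdsWithin τ (Set.Ico t₀ τ), 0 < FB u :=
      hBt.eventually (eventually_gt_nhds hcon.2)
    obtain ⟨u, ⟨hu1, hu2⟩, hu3⟩ := ((e1.and e2).and eventually_mem_nhdsWithin).exists
    have hv := hlow u hu3
    rcases AB_neg (p u) (q u) (a u) (b u) hv.1 hv.2 with h | h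
    · exact absurd h (by linarith)
    · exact absurd h (by linarith)
  have hpqτ : p τ ≠ q τ := hne τ hτI
  have hDτ : D τ = FB τ * G τ - FA τ * H τ := rfl
  refine ⟨τ, ⟨hτ0, hτI.2⟩, ?_⟩
  by_cases hg : G τ = 0
  · by_cases hh : H τ = 0
    · rcases hABτ with hA' | hB'
      · exact Or.inl (seg_of _ _ _ hpqτ hg hA')
      · exact Or.inr (Or.inl (seg_of _ _ _ hpqτ hh hB'))
    · have hFA0 : FA τ ≤ 0 := by
        rw [hDτ, hg] at DH_ge
        nlinarith [sq_pos_of_ne_zero hh]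
      exact Or.inl (seg_of _ _ _ hpqτ hg hFA0)
  · by_cases hh : H τ = 0
    · have hFB0 : FB τ ≤ 0 := by
        rw [hDτ, hh] at DG_le
        nlinarith [sq_pos_of_ne_zero hg]
      exact Or.inr (Or.inl (seg_of _ _ _ hpqτ hh hFB0))
    · have hGH : G τ * H τ < 0 := lt_of_le_of_ne GH_le (mul_ne_zero hg hh)
      have hDG0 : D τ * G τ = 0 := by
        rcases hτC.2 with hc | hc
        · linarith
        · linarith
      have hD0 : D τ = 0 := by
        rcases mul_eq_zero.mp hDG0 with h | h
        · exact h
        · exact absurd h hg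
      exact Or.inr (Or.inr (cocirc _ _ _ _ hg hD0))
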